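/- The inverse Sibuya process satisfies E[L_α(t)] = binom(t+α, t) - 1 for every t ∈ ℕ_0. -/

import Mathlib

open MeasureTheory ProbabilityTheory

/-- Generalized binomial coefficient `binom(x, k) = x(x-1)⋯(x-k+1)/k!` for real `x`. -/
noncomputable def gbinom (x : ℝ) (k : ℕ) : ℝ :=
  (∏ i ∈ Finset.range k, (x - i)) / (Nat.factorial k)

/-- Sibuya(α) probability mass function. -/
noncomputable def sibuya (α : ℝ) (k : ℕ) : ℝ :=
  if k = 0 then 0 else (-1 : ℝ) ^ (k - 1) * gbinom α k

lemma gbinom_zero (x : ℝ) : gbinom x 0 = 1 := by simp [gbinom]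

lemma prod_shift (x : ℝ) (k : ℕ) :
    ∏ i ∈ Finset.range (k+1), (x - i) = x * ∏ i ∈ Finset.range k, (x - 1 - i) := by
  rw [Finset.prod_range_succ']
  push_cast
  simp only [Nat.cast_zero, sub_zero]
  rw [mul_comm]
  congr 1
  apply Finset.prod_congr rfl
  intro i _
  push_cast
  ring

lemma gbinom_succ (x : ℝ) (k : ℕ) :
    ((k:ℝ)+1) * gbinom x (k+1) = x * gbinom (x-1) k := by
  unfold gbinom
  rw [prod_shift, Nat.factorial_succ]
  push_cast
  field_simp

lemma gbinom_pascal (x : ℝ) (k : ℕ) :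
    gbinom x (k+1) = gbinom (x-1) k + gbinom (x-1) (k+1) := by
  unfold gbinom
  rw [prod_shift x k, Nat.factorial_succ, Finset.prod_range_succ]
  have hk : (Nat.factorial k : ℝ) ≠ 0 := by exact_mod_cast (Nat.factorial_pos k).ne'
  have hk1 : ((k+1) * Nat.factorial k : ℝ) ≠ 0 := by
    positivity
  push_cast
  field_simp
  ring

lemma gbinom_vandermonde (s : ℕ) (x y : ℝ) :
    ∑ k ∈ Finset.range (s+1), gbinom x k * gbinom y (s-k) = gbinom (x+y) s := by
  induction s generalizing x y with
  | zero => simp [gbinom_zero]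
  | succ s ih =>
    have hs1 : ((s:ℝ)+1) ≠ 0 := by positivity
    apply mul_left_cancel₀ hs1
    have key : ((s:ℝ)+1) * ∑ k ∈ Finset.range (s+2), gbinom x k * gbinom y (s+1-k)
        = x * gbinom (x-1+y) s + y * gbinom (x+(y-1)) s := by
      rw [Finset.mul_sum]
      have split : ∀ k ∈ Finset.range (s+2),
          ((s:ℝ)+1) * (gbinom x k * gbinom y (s+1-k))
          = (k:ℝ) * gbinom x k * gbinom y (s+1-k)
            + gbinom x k * (((s+1-k : ℕ):ℝ) * gbinom y (s+1-k)) := by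
        intro k hk
        have hks : k ≤ s+1 := by
          simpa [Nat.lt_succ_iff] using Finset.mem_range.mp hk
        have : ((s+1-k : ℕ):ℝ) = (s:ℝ) + 1 - k := by
          push_cast [Nat.cast_sub hks]; ring
        rw [this]; ring
      rw [Finset.sum_congr rfl split, Finset.sum_add_distrib]
      have first : ∑ k ∈ Finset.range (s+2), (k:ℝ) * gbinom x k * gbinom y (s+1-k)
          = x * gbinom (x-1+y) s := by
        rw [Finset.sum_range_succ']
        simp only [Nat.cast_zero, zero_mul, add_zero]
        rw [show (∑ j ∈ Finset.range (s+1),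
            ((j+1:ℕ):ℝ) * gbinom x (j+1) * gbinom y (s+1-(j+1)))
            = ∑ j ∈ Finset.range (s+1), x * (gbinom (x-1) j * gbinom y (s-j)) from ?_,
          ← Finset.mul_sum, ih]
        apply Finset.sum_congr rfl
        intro j hj
        have h1 : s+1-(j+1) = s - j := by omega
        rw [h1]
        push_cast
        rw [gbinom_succ x j]
        ring
      have second : ∑ k ∈ Finset.range (s+2),
          gbinom x k * (((s+1-k : ℕ):ℝ) * gbinom y (s+1-k))
          = y * gbinom (x+(y-1)) s := by
        rw [Finset.sum_range_succ]
        simp only [Nat.sub_self, Nat.cast_zero, zero_mul, mul_zero, add_zero]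
        rw [show (∑ k ∈ Finset.range (s+1),
            gbinom x k * (((s+1-k:ℕ):ℝ) * gbinom y (s+1-k)))
            = ∑ k ∈ Finset.range (s+1), y * (gbinom x k * gbinom (y-1) (s-k)) from ?_,
          ← Finset.mul_sum, ih]
        apply Finset.sum_congr rfl
        intro k hk
        have hks : k ≤ s := by simpa [Nat.lt_succ_iff] using Finset.mem_range.mp hk
        have h1 : s+1-k = (s-k)+1 := by omega
        rw [h1]
        push_cast
        rw [gbinom_succ y (s-k)]
        ring
      rw [first, second]
    rw [key]
    have e1 : x - 1 + y = x + y - 1 := by ring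
    have e2 : x + (y - 1) = x + y - 1 := by ring
    rw [e1, e2, ← add_mul, ← gbinom_succ (x+y) s]

lemma gbinom_zero_left {s : ℕ} (hs : s ≠ 0) : gbinom 0 s = 0 := by
  unfold gbinom
  rw [Finset.prod_eq_zero (Finset.mem_range.mpr (Nat.pos_of_ne_zero hs)) (by norm_num)]
  simp

/-- `u m = binom(α+m-1, m)`, coefficient of `(1-X)^{-α}`. -/
noncomputable def ucoef (α : ℝ) (m : ℕ) : ℝ := gbinom (α + m - 1) m

lemma ucoef_eq (α : ℝ) (m : ℕ) : ucoef α m = (-1)^m * gbinom (-α) m := by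
  have hnum : ∏ i ∈ Finset.range m, (α + m - 1 - i)
      = (-1:ℝ)^m * ∏ i ∈ Finset.range m, (-α - i) := by
    rw [show ((-1:ℝ)^m) = ∏ _i ∈ Finset.range m, (-1:ℝ) from by simp,
      ← Finset.prod_mul_distrib, ← Finset.prod_range_reflect (fun i => α + m - 1 - i)]
    apply Finset.prod_congr rfl
    intro i hi
    have him : i < m := Finset.mem_range.mp hi
    have hc : ((m - 1 - i : ℕ) : ℝ) = (m:ℝ) - 1 - i := by
      have h' : m - 1 - i = m - (1+i) := by omega
      rw [h', Nat.cast_sub (by omega)]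
      push_cast; ring
    rw [hc]
    ring
  unfold ucoef gbinom
  rw [hnum, mul_div_assoc]

lemma ucoef_zero (α : ℝ) : ucoef α 0 = 1 := by simp [ucoef, gbinom_zero]

lemma sibuya_eq (α : ℝ) (a : ℕ) :
    sibuya α a = (if a = 0 then (1:ℝ) else 0) - (-1)^a * gbinom α a := by
  unfold sibuya
  rcases Nat.eq_zero_or_pos a with h | h
  · subst h; simp [gbinom_zero]
  · have ha : a ≠ 0 := h.ne'
    simp only [ha, if_false, if_neg ha]
    obtain ⟨b, rfl⟩ : ∃ b, a = b+1 := ⟨a-1, by omega⟩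
    simp only [Nat.add_sub_cancel, pow_succ]
    ring

/-- Key renewal identity: for `s ≥ 1`, `∑_{a≤s} p_a u_{s-a} = u_s`. -/
lemma sibuya_conv_ucoef (α : ℝ) {s : ℕ} (hs : s ≠ 0) :
    ∑ a ∈ Finset.range (s+1), sibuya α a * ucoef α (s-a) = ucoef α s := by
  have key : ∀ a ∈ Finset.range (s+1),
      sibuya α a * ucoef α (s-a)
      = (if a = 0 then (1:ℝ) else 0) * ucoef α (s-a)
        - (-1)^s * (gbinom α a * gbinom (-α) (s-a)) := by
    intro a ha
    have has : a ≤ s := by simpa [Nat.lt_succ_iff] using Finset.mem_range.mp ha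
    rw [sibuya_eq]
    have hu := ucoef_eq α (s-a)
    have hp : (-1:ℝ)^a * (-1:ℝ)^(s-a) = (-1)^s := by
      rw [← pow_add]; congr 1; omega
    linear_combination (-(-1:ℝ)^a * gbinom α a) * hu
      + (-(gbinom α a * gbinom (-α) (s-a))) * hp
  rw [Finset.sum_congr rfl key, Finset.sum_sub_distrib, ← Finset.mul_sum,
    gbinom_vandermonde s α (-α)]
  rw [show α + -α = 0 from by ring, gbinom_zero_left hs, mul_zero, sub_zero]
  rw [Finset.sum_eq_single 0]
  · simp
  · intro b _ hb; simp [hb]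
  · intro h; simp at h


/-- Coefficients of the `n`-fold convolution of the Sibuya pmf. -/
noncomputable def cconv (α : ℝ) : ℕ → ℕ → ℝ
  | 0, s => if s = 0 then 1 else 0
  | (n+1), s => ∑ a ∈ Finset.range (s+1), sibuya α a * cconv α n (s-a)

lemma cconv_eq_zero (α : ℝ) : ∀ n s, s < n → cconv α n s = 0 := by
  intro n
  induction n with
  | zero => intro s hs; omega
  | succ n ih =>
    intro s hs
    rw [cconv]
    apply Finset.sum_eq_zero
    intro a ha
    have has : a ≤ s := by simpa [Nat.lt_succ_iff] using Finset.mem_range.mp ha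
    rcases Nat.eq_zero_or_pos a with h | h
    · simp [h, sibuya]
    · rw [ih (s-a) (by omega), mul_zero]

lemma sum_cconv (α : ℝ) (s : ℕ) :
    ∑ n ∈ Finset.range (s+1), cconv α n s = ucoef α s := by
  induction s using Nat.strong_induction_on with
  | _ s ih =>
    rcases Nat.eq_zero_or_pos s with h | h
    · subst h; simp [cconv, ucoef_zero]
    have hs : s ≠ 0 := h.ne'
    rw [Finset.sum_range_succ']
    have h0 : cconv α 0 s = 0 := by simp [cconv, hs]
    rw [h0, add_zero]
    have step : ∀ n ∈ Finset.range s, cconv α (n+1) s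
        = ∑ a ∈ Finset.range (s+1), sibuya α a * cconv α n (s-a) := fun n _ => rfl
    rw [Finset.sum_congr rfl step, Finset.sum_comm]
    have inner : ∀ a ∈ Finset.range (s+1),
        ∑ n ∈ Finset.range s, sibuya α a * cconv α n (s-a)
        = sibuya α a * ucoef α (s-a) := by
      intro a ha
      have has : a ≤ s := by simpa [Nat.lt_succ_iff] using Finset.mem_range.mp ha
      rcases Nat.eq_zero_or_pos a with h0' | h0'
      · simp [h0', sibuya]
      · rw [← Finset.mul_sum]
        congr 1
        have hsub : Finset.range (s-a+1) ⊆ Finset.range s := by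
          intro x hx
          simp only [Finset.mem_range] at *
          omega
        rw [← Finset.sum_subset hsub (by
          intro x _ hx
          simp only [Finset.mem_range] at hx
          exact cconv_eq_zero α x (s-a) (by omega))]
        exact ih (s-a) (by omega)
    rw [Finset.sum_congr rfl inner]
    exact sibuya_conv_ucoef α hs

lemma sum_ucoef (α : ℝ) (t : ℕ) :
    ∑ s ∈ Finset.range (t+1), ucoef α s = gbinom (α + t) t := by
  induction t with
  | zero => simp [ucoef_zero, gbinom_zero]
  | succ t ih =>
    rw [Finset.sum_range_succ, ih]
    have h1 : ucoef α (t+1) = gbinom (α + (t+1:ℕ) - 1) (t+1) := rfl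
    have h2 := gbinom_pascal (α + ((t:ℝ)+1)) t
    have e1 : α + ((t:ℝ)+1) - 1 = α + t := by ring
    have e2 : α + ((t+1:ℕ):ℝ) - 1 = α + t := by push_cast; ring
    have e3 : α + ((t+1:ℕ):ℝ) = α + ((t:ℝ)+1) := by push_cast; ring
    rw [h1, e2, e3, h2, e1]


lemma conv_law {Ω : Type*} [MeasurableSpace Ω] (μ : Measure Ω) [IsProbabilityMeasure μ]
    (α : ℝ) (Z : ℕ → Ω → ℕ) (hmeas : ∀ i, Measurable (Z i))
    (hindep : iIndepFun Z μ)
    (hlaw : ∀ i k, (μ {ω | Z i ω = k}).toReal = sibuya α k) :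
    ∀ n m s, (μ {ω | ∑ j ∈ Finset.Ico m (m+n), Z j ω = s}).toReal = cconv α n s := by
  intro n
  induction n with
  | zero =>
    intro m s
    simp only [Nat.add_zero, Finset.Ico_self, Finset.sum_empty]
    rcases Nat.eq_zero_or_pos s with h | h
    · subst h
      simp [cconv]
    · have : {ω : Ω | 0 = s} = ∅ := by
        ext ω; simp; omega
      rw [this]
      simp [cconv, h.ne']
  | succ n ih =>
    intro m s
    set T : Ω → ℕ := fun ω => ∑ j ∈ Finset.Ico (m+1) (m+1+n), Z j ω with hT
    have hTmeas : Measurable T := Finset.measurable_sum _ (fun j _ => hmeas j)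
    have hsum : ∀ ω, ∑ j ∈ Finset.Ico m (m+(n+1)), Z j ω = Z m ω + T ω := by
      intro ω
      rw [show m+(n+1) = m+1+n from by omega]
      exact Finset.sum_eq_sum_Ico_succ_bot (by omega) _
    have hset : {ω | ∑ j ∈ Finset.Ico m (m+(n+1)), Z j ω = s}
        = ⋃ a ∈ Finset.range (s+1), ({ω | Z m ω = a} ∩ {ω | T ω = s - a}) := by
      ext ω
      simp only [Set.mem_setOf_eq, Set.mem_iUnion, Set.mem_inter_iff, Finset.mem_range,
        hsum ω]
      constructor
      · intro h
        exact ⟨Z m ω, by omega, rfl, by omega⟩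
      · rintro ⟨a, ha, h1, h2⟩
        omega
    have hsets_meas : ∀ a : ℕ, MeasurableSet ({ω | Z m ω = a} ∩ {ω | T ω = s - a}) := by
      intro a
      exact ((hmeas m) (measurableSet_singleton a)).inter (hTmeas (measurableSet_singleton _))
    have hdisj : (↑(Finset.range (s+1)) : Set ℕ).PairwiseDisjoint
        (fun a => ({ω | Z m ω = a} ∩ {ω | T ω = s - a})) := by
      intro a _ b _ hab
      apply Set.disjoint_left.mpr
      rintro ω ⟨h1, _⟩ ⟨h2, _⟩
      exact hab (h1 ▸ h2 ▸ rfl)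
    have hind : IndepFun (Z m) (∑ j ∈ Finset.Ico (m+1) (m+1+n), Z j) μ :=
      (hindep.indepFun_finsetSum_of_notMem hmeas
        (by simp [Finset.mem_Ico])).symm
    have hterm : ∀ a, μ ({ω | Z m ω = a} ∩ {ω | T ω = s - a})
        = μ {ω | Z m ω = a} * μ {ω | T ω = s - a} := by
      intro a
      have h1 : {ω | Z m ω = a} = Z m ⁻¹' {a} := rfl
      have h2 : {ω | T ω = s - a} = (∑ j ∈ Finset.Ico (m+1) (m+1+n), Z j) ⁻¹' {s-a} := by
        ext ω
        simp [hT, Finset.sum_apply]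
      rw [h1, h2]
      exact hind.measure_inter_preimage_eq_mul _ _ (measurableSet_singleton _)
        (measurableSet_singleton _)
    rw [hset, measure_biUnion_finset hdisj (fun a _ => hsets_meas a),
      ENNReal.toReal_sum (fun a _ => measure_ne_top μ _)]
    rw [cconv]
    apply Finset.sum_congr rfl
    intro a _
    rw [hterm a, ENNReal.toReal_mul, hlaw m a]
    congr 1
    have := ih (m+1) (s-a)
    rw [← this]


/-- The inverse Sibuya process satisfies
`E[L_α(t)] = binom(t+α, t) - 1` for every `t ∈ ℕ`. -/
theorem sibuya_inverse_mean
    {Ω : Type*} [MeasurableSpace Ω] (μ : Measure Ω) [IsProbabilityMeasure μ]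
    (α : ℝ) (hα : α ∈ Set.Ioo (0 : ℝ) 1)
    (Z : ℕ → Ω → ℕ) (hmeas : ∀ i, Measurable (Z i))
    (hindep : iIndepFun Z μ)
    (hlaw : ∀ i k, (μ {ω | Z i ω = k}).toReal = sibuya α k)
    (S : ℕ → Ω → ℕ) (hS : ∀ n ω, S n ω = ∑ j ∈ Finset.range n, Z j ω)
    (L : ℕ → Ω → ℕ) (hL : ∀ t ω, L t ω = sSup {n : ℕ | S n ω ≤ t})
    (t : ℕ) :
    ∫ ω, (L t ω : ℝ) ∂μ = gbinom ((t : ℝ) + α) t - 1 := by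
  have hSmeas : ∀ n, Measurable (S n) := by
    intro n
    have : S n = fun ω => ∑ j ∈ Finset.range n, Z j ω := funext (hS n)
    rw [this]
    exact Finset.measurable_sum _ (fun j _ => hmeas j)
  have hAmeas : ∀ n, MeasurableSet {ω | S n ω ≤ t} := by
    intro n
    exact (hSmeas n) (measurableSet_Iic (α := ℕ) (a := t))
  -- law of S n
  have hSlaw : ∀ n s, (μ {ω | S n ω = s}).toReal = cconv α n s := by
    intro n s
    have h := conv_law μ α Z hmeas hindep hlaw n 0 s
    have hset : {ω | S n ω = s} = {ω | ∑ j ∈ Finset.Ico 0 (0+n), Z j ω = s} := by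
      ext ω
      rw [Set.mem_setOf_eq, Set.mem_setOf_eq, hS n ω, Finset.range_eq_Ico, Nat.zero_add]
    rw [hset]
    exact h
  -- tail probabilities
  have htail : ∀ n, (μ {ω | S n ω ≤ t}).toReal = ∑ s ∈ Finset.range (t+1), cconv α n s := by
    intro n
    have hset : {ω | S n ω ≤ t} = ⋃ s ∈ Finset.range (t+1), {ω | S n ω = s} := by
      ext ω
      simp only [Set.mem_setOf_eq, Set.mem_iUnion, Finset.mem_range]
      constructor
      · intro h; exact ⟨S n ω, by omega, rfl⟩
      · rintro ⟨s, hs, h⟩; omega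
    have hdisj : (↑(Finset.range (t+1)) : Set ℕ).PairwiseDisjoint
        (fun s => {ω | S n ω = s}) := by
      intro a _ b _ hab
      apply Set.disjoint_left.mpr
      rintro ω h1 h2
      exact hab ((Set.mem_setOf_eq ▸ h1) ▸ (Set.mem_setOf_eq ▸ h2) ▸ rfl)
    rw [hset, measure_biUnion_finset hdisj
        (fun s _ => (hSmeas n) (measurableSet_singleton s)),
      ENNReal.toReal_sum (fun s _ => measure_ne_top μ _)]
    exact Finset.sum_congr rfl (fun s _ => hSlaw n s)
  -- a.e. identity for L
  set g : Ω → ℝ := fun ω => ∑ n ∈ Finset.Icc 1 t,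
    Set.indicator {ω' | S n ω' ≤ t} (fun _ => (1:ℝ)) ω with hg
  have hbad : μ (⋃ j, {ω | Z j ω = 0}) = 0 := by
    apply measure_iUnion_null
    intro j
    have h1 := hlaw j 0
    rw [show sibuya α 0 = 0 from by simp [sibuya]] at h1
    rcases (ENNReal.toReal_eq_zero_iff _).mp h1 with h | h
    · exact h
    · exact absurd h (measure_ne_top μ _)
  have hptw : ∀ ω, ω ∉ (⋃ j, {ω' | Z j ω' = 0}) → (L t ω : ℝ) = g ω := by
    intro ω hω
    have hZ : ∀ j, Z j ω ≠ 0 := by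
      intro j hj
      exact hω (Set.mem_iUnion.mpr ⟨j, hj⟩)
    have hmem0 : (0:ℕ) ∈ {n | S n ω ≤ t} := by
      simp only [Set.mem_setOf_eq, hS 0 ω, Finset.range_zero, Finset.sum_empty]
      omega
    have hub : ∀ n ∈ {n | S n ω ≤ t}, n ≤ t := by
      intro n hn
      simp only [Set.mem_setOf_eq] at hn
      have h1 : n ≤ S n ω := by
        rw [hS]
        calc n = ∑ _j ∈ Finset.range n, 1 := by simp
        _ ≤ ∑ j ∈ Finset.range n, Z j ω :=
          Finset.sum_le_sum (fun j _ => Nat.one_le_iff_ne_zero.mpr (hZ j))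
      omega
    have hbdd : BddAbove {n | S n ω ≤ t} := ⟨t, fun n hn => hub n hn⟩
    have hsup : sSup {n | S n ω ≤ t} ∈ {n | S n ω ≤ t} := Nat.sSup_mem ⟨0, hmem0⟩ hbdd
    have hLle : L t ω ≤ t := by rw [hL]; exact hub _ hsup
    have hiff : ∀ n, S n ω ≤ t ↔ n ≤ L t ω := by
      intro n
      constructor
      · intro h
        rw [hL]
        exact le_csSup hbdd h
      · intro h
        have hLmem : S (L t ω) ω ≤ t := by
          have := hsup
          rw [← hL t ω] at this
          exact this
        have hmono : S n ω ≤ S (L t ω) ω := by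
          rw [hS, hS]
          exact Finset.sum_le_sum_of_subset (Finset.range_subset_range.mpr h)
        omega
    have hg2 : g ω = ∑ n ∈ Finset.Icc 1 t, (if n ≤ L t ω then (1:ℝ) else 0) := by
      apply Finset.sum_congr rfl
      intro n _
      rw [Set.indicator_apply]
      exact if_congr (by simpa [Set.mem_setOf_eq] using hiff n) rfl rfl
    rw [hg2, Finset.sum_boole]
    have hfilt : (Finset.Icc 1 t).filter (fun n => n ≤ L t ω) = Finset.Icc 1 (L t ω) := by
      ext x
      simp only [Finset.mem_filter, Finset.mem_Icc]
      omega
    rw [hfilt, Nat.card_Icc]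
    simp
  have hae : (fun ω => (L t ω : ℝ)) =ᵐ[μ] g := by
    rw [Filter.EventuallyEq, ae_iff]
    refine measure_mono_null ?_ hbad
    intro ω hω
    by_contra hmem
    exact hω (hptw ω hmem)
  rw [integral_congr_ae hae, hg,
    integral_finset_sum _ (fun n _ => (integrable_const (1:ℝ)).indicator (hAmeas n))]
  have hint : ∀ n ∈ Finset.Icc 1 t,
      ∫ ω, Set.indicator {ω' | S n ω' ≤ t} (fun _ => (1:ℝ)) ω ∂μ
      = ∑ s ∈ Finset.range (t+1), cconv α n s := by
    intro n _
    rw [integral_indicator_const (1:ℝ) (hAmeas n), smul_eq_mul, mul_one]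
    exact htail n
  rw [Finset.sum_congr rfl hint, Finset.sum_comm]
  have hinner : ∀ s ∈ Finset.range (t+1),
      ∑ n ∈ Finset.Icc 1 t, cconv α n s
      = ucoef α s - (if s = 0 then (1:ℝ) else 0) := by
    intro s hs
    have hst : s ≤ t := by simpa [Nat.lt_succ_iff] using Finset.mem_range.mp hs
    have hsub : Finset.Icc 1 s ⊆ Finset.Icc 1 t := by
      intro x hx
      simp only [Finset.mem_Icc] at *
      omega
    have h1 : ∑ n ∈ Finset.Icc 1 t, cconv α n s = ∑ n ∈ Finset.Icc 1 s, cconv α n s := by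
      refine (Finset.sum_subset hsub ?_).symm
      intro x hx hnx
      simp only [Finset.mem_Icc] at hx hnx
      exact cconv_eq_zero α x s (by omega)
    have h2 : Finset.range (s+1) = insert 0 (Finset.Icc 1 s) := by
      ext x
      simp only [Finset.mem_range, Finset.mem_insert, Finset.mem_Icc]
      omega
    have h3 := sum_cconv α s
    rw [h2, Finset.sum_insert (by simp)] at h3
    have h4 : cconv α 0 s = if s = 0 then (1:ℝ) else 0 := rfl
    rw [h1]
    rw [h4] at h3
    linarith
  rw [Finset.sum_congr rfl hinner, Finset.sum_sub_distrib, sum_ucoef]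
  have h5 : ∑ s ∈ Finset.range (t+1), (if s = 0 then (1:ℝ) else 0) = 1 := by
    rw [Finset.sum_ite_eq' (Finset.range (t+1)) 0 (fun _ => (1:ℝ))]
    simp
  rw [h5, show α + (t:ℝ) = (t:ℝ) + α from add_comm _ _]
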